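/- Let n ≥ 2 and consider the commutative ℂ-algebra A generated by invertible elements σ_0,...,σ_{n-1}, ν_0,...,ν_{n-1} subject to the relations σ_i^n = 1, (ν_i - 1)(ν_j - 1) = 0, σ_i(ν_j - 1) = ν_j - 1, and (σ_i - 1)(σ_j - 1) = 0 for i ≠ j. Then A has ℂ-dimension n² + 1. -/

import Mathlib

open MvPolynomial TrivSqZeroExt

noncomputable section

abbrev Bmod (n : ℕ) : Type := (Fin n × Fin (n-1) → ℂ) × TrivSqZeroExt ℂ (Fin n → ℂ)

def zet (n : ℕ) : ℂ := Complex.exp (2 * Real.pi * Complex.I / n)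

def vmap (n : ℕ) : Fin n ⊕ Fin n → Bmod n
  | .inl i => (fun p => if p.1 = i then zet n ^ ((p.2 : ℕ) + 1) else 1, 1)
  | .inr j => (1, 1 + TrivSqZeroExt.inr (Pi.single j 1))

def phi (n : ℕ) : MvPolynomial (Fin n ⊕ Fin n) ℂ →ₐ[ℂ] Bmod n := aeval (vmap n)

def tszeEquiv (n : ℕ) : TrivSqZeroExt ℂ (Fin n → ℂ) ≃ₗ[ℂ] ℂ × (Fin n → ℂ) :=
  { toFun := fun x => (x.fst, x.snd)
    invFun := fun p => TrivSqZeroExt.inl p.1 + TrivSqZeroExt.inr p.2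
    map_add' := by intros; ext <;> simp
    map_smul' := by intros; ext <;> simp
    left_inv := fun x => inl_fst_add_inr_snd_eq x
    right_inv := by intro p; ext <;> simp }

instance (n : ℕ) : Module.Finite ℂ (TrivSqZeroExt ℂ (Fin n → ℂ)) :=
  Module.Finite.equiv (tszeEquiv n).symm

lemma finrank_Bmod (n : ℕ) (hn : 2 ≤ n) : Module.finrank ℂ (Bmod n) = n^2 + 1 := by
  rw [Module.finrank_prod, (tszeEquiv n).finrank_eq, Module.finrank_prod,
    Module.finrank_pi, Module.finrank_pi, Module.finrank_self]
  simp only [Fintype.card_prod, Fintype.card_fin]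
  obtain ⟨m, rfl⟩ : ∃ m, n = m + 2 := ⟨n - 2, by omega⟩
  have h1 : m + 2 - 1 = m + 1 := by omega
  rw [h1]
  ring_nf


lemma phi_inl (n : ℕ) (i : Fin n) :
    phi n (X (Sum.inl i)) = (fun p => if p.1 = i then zet n ^ ((p.2 : ℕ) + 1) else 1, 1) := by
  simp [phi, vmap]

lemma phi_inr (n : ℕ) (j : Fin n) :
    phi n (X (Sum.inr j)) = (1, 1 + TrivSqZeroExt.inr (Pi.single j 1)) := by
  simp [phi, vmap]

lemma phi_inr_sub_one (n : ℕ) (j : Fin n) :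
    phi n (X (Sum.inr j) - 1) = (0, TrivSqZeroExt.inr (Pi.single j 1)) := by
  rw [map_sub, map_one, phi_inr]
  ext
  · simp
  · simp
  · simp

lemma zet_pow_n (n : ℕ) (hn : n ≠ 0) : zet n ^ n = 1 :=
  (Complex.isPrimitiveRoot_exp n hn).pow_eq_one

lemma rel1 (n : ℕ) (hn : n ≠ 0) (i : Fin n) : phi n (X (Sum.inl i) ^ n - 1) = 0 := by
  rw [map_sub, map_pow, map_one, phi_inl, sub_eq_zero]
  ext p
  · simp only [Prod.pow_fst, Pi.pow_apply, Prod.fst_one, Pi.one_apply]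
    split_ifs
    · rw [← pow_mul, mul_comm, pow_mul, zet_pow_n n hn, one_pow]
    · exact one_pow n
  · simp [Prod.pow_snd]
  · simp [Prod.pow_snd]

lemma rel2 (n : ℕ) (i j : Fin n) :
    phi n ((X (Sum.inr i) - 1) * (X (Sum.inr j) - 1)) = 0 := by
  rw [map_mul, phi_inr_sub_one, phi_inr_sub_one]
  ext
  · simp
  · simp [Prod.snd_mul, snd_mul]
  · simp [Prod.snd_mul, snd_mul]

lemma rel3 (n : ℕ) (i j : Fin n) :
    phi n (X (Sum.inl i) * (X (Sum.inr j) - 1) - (X (Sum.inr j) - 1)) = 0 := by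
  rw [map_sub, map_mul, phi_inr_sub_one, phi_inl, sub_eq_zero]
  ext
  · simp
  · simp [Prod.snd_mul, snd_mul]
  · simp [Prod.snd_mul, snd_mul]

lemma rel4 (n : ℕ) (i j : Fin n) (hij : i ≠ j) :
    phi n ((X (Sum.inl i) - 1) * (X (Sum.inl j) - 1)) = 0 := by
  rw [map_mul, map_sub, map_sub, map_one, phi_inl, phi_inl]
  ext p
  · simp only [Prod.fst_mul, Prod.fst_sub, Prod.fst_one, Pi.mul_apply, Pi.sub_apply,
      Pi.one_apply, Prod.fst_zero, Pi.zero_apply]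
    rcases eq_or_ne p.1 i with h | h
    · have h2 : p.1 ≠ j := by rw [h]; exact hij
      rw [if_neg h2, sub_self, mul_zero]
    · rw [if_neg h, sub_self, zero_mul]
  · simp [Prod.snd_mul, snd_mul]
  · simp [Prod.snd_mul, snd_mul]

lemma sum_omega {n : ℕ} {ω : ℂ} (h1 : ω ^ n = 1) (h : ω ≠ 1) :
    ∑ k ∈ Finset.range n, ω ^ k = 0 := by
  rw [geom_sum_eq h, h1, sub_self, zero_div]

lemma zet_pow_pow (n m : ℕ) (hn : n ≠ 0) : (zet n ^ m) ^ n = 1 := by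
  rw [← pow_mul, mul_comm, pow_mul,
    show zet n ^ n = 1 from (Complex.isPrimitiveRoot_exp n hn).pow_eq_one, one_pow]

lemma zet_ne_zero (n : ℕ) : zet n ≠ 0 := Complex.exp_ne_zero _

def eProj (n : ℕ) (i : Fin n) (c : Fin (n-1)) : MvPolynomial (Fin n ⊕ Fin n) ℂ :=
  C ((n : ℂ)⁻¹) * ∑ k ∈ Finset.range n, C ((zet n)⁻¹ ^ (((c : ℕ)+1) * k)) * X (Sum.inl i) ^ k

lemma phi_eProj (n : ℕ) (hn : 2 ≤ n) (i : Fin n) (c : Fin (n-1)) :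
    phi n (eProj n i c) = (Pi.single (i,c) 1, 0) := by
  have hn0 : n ≠ 0 := by omega
  have hζ := Complex.isPrimitiveRoot_exp n hn0
  have hne : (n : ℂ) ≠ 0 := Nat.cast_ne_zero.mpr hn0
  have key : ∀ z : ℂ, z ^ n = 1 →
      ∑ k ∈ Finset.range n, (zet n)⁻¹ ^ (((c : ℕ)+1) * k) * z ^ k
        = if z = zet n ^ ((c : ℕ)+1) then (n : ℂ) else 0 := by
    intro z hz
    have : ∀ k, (zet n)⁻¹ ^ (((c : ℕ)+1) * k) * z ^ k = ((zet n)⁻¹ ^ ((c : ℕ)+1) * z) ^ k := by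
      intro k; rw [mul_pow, pow_mul]
    simp_rw [this]
    by_cases h : z = zet n ^ ((c : ℕ)+1)
    · subst h
      rw [if_pos rfl, inv_pow, inv_mul_cancel₀ (pow_ne_zero _ (zet_ne_zero n))]
      simp
    · rw [if_neg h, sum_omega]
      · rw [mul_pow, hz, mul_one, inv_pow, inv_pow, zet_pow_pow n _ hn0, inv_one]
      · intro heq
        rw [inv_pow] at heq
        exact h ((inv_mul_eq_one₀ (pow_ne_zero ((c:ℕ)+1) (zet_ne_zero n))).mp heq).symm
  have expand : phi n (eProj n i c)
      = algebraMap ℂ (Bmod n) ((n : ℂ)⁻¹) *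
        ∑ k ∈ Finset.range n, algebraMap ℂ (Bmod n) ((zet n)⁻¹ ^ (((c : ℕ)+1) * k)) *
          (phi n (X (Sum.inl i))) ^ k := by
    simp [eProj, map_mul, map_sum, map_pow]
  have halg1 : ∀ (a : ℂ) (p : Fin n × Fin (n-1)), ((algebraMap ℂ (Bmod n)) a).1 p = a :=
    fun a p => rfl
  have halg2f : ∀ a : ℂ, ((algebraMap ℂ (Bmod n)) a).2.fst = a := fun a => rfl
  have halg2s : ∀ a : ℂ, ((algebraMap ℂ (Bmod n)) a).2.snd = 0 := fun a => rfl
  have hc1 : (c : ℕ) + 1 < n := by have := c.2; omega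
  have hzc : zet n ^ ((c : ℕ) + 1) ≠ 1 :=
    hζ.pow_ne_one_of_pos_of_lt (by omega) hc1
  have key1 : ∑ k ∈ Finset.range n, (zet n)⁻¹ ^ (((c : ℕ)+1) * k) = 0 := by
    have h := key 1 (one_pow n)
    simpa [if_neg (Ne.symm hzc)] using h
  rw [expand, phi_inl]
  ext p
  · -- first component
    simp only [Prod.fst_mul, Pi.mul_apply, Prod.fst_sum, Finset.sum_apply,
      Prod.pow_fst, Pi.pow_apply, halg1]
    by_cases hp : p.1 = i
    · simp_rw [if_pos hp]
      rw [key _ (zet_pow_pow n _ hn0)]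
      by_cases hc : p.2 = c
      · have hpc : p = (i, c) := Prod.ext hp hc
        rw [hpc, if_pos rfl, Pi.single_eq_same, inv_mul_cancel₀ hne]
      · have hne2 : zet n ^ ((p.2 : ℕ) + 1) ≠ zet n ^ ((c : ℕ) + 1) := by
          intro h
          have hp2 : (p.2 : ℕ) + 1 < n := by have := p.2.2; omega
          exact hc (Fin.ext (by have := hζ.pow_inj hp2 hc1 h; omega))
        rw [if_neg hne2, mul_zero]
        rw [Pi.single_eq_of_ne (fun h => hc (by rw [h]))]
    · simp_rw [if_neg hp, one_pow, mul_one]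
      rw [key1, mul_zero, Pi.single_eq_of_ne (fun h => hp (by rw [h]))]
  · simp only [Prod.snd_mul, Prod.snd_sum, Prod.pow_snd, fst_mul, fst_sum, fst_pow,
      halg2f, fst_one, one_pow, mul_one, Prod.snd_zero, fst_zero]
    rw [key1, mul_zero]
  · simp only [Prod.snd_mul, Prod.snd_sum, Prod.pow_snd, snd_mul, snd_sum, snd_pow,
      halg2f, halg2s, fst_one, snd_one, one_pow, Prod.snd_zero, snd_zero]
    simp

lemma phi_inr_sub_one' (n : ℕ) (j : Fin n) :
    phi n (X (Sum.inr j) - 1) = (0, TrivSqZeroExt.inr (Pi.single j 1)) := by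
  rw [map_sub, map_one]
  have : phi n (X (Sum.inr j)) = (1, 1 + TrivSqZeroExt.inr (Pi.single j 1)) := by
    simp [phi, vmap]
  rw [this]
  ext
  · simp
  · simp
  · simp

lemma phi_q (n : ℕ) (hn : 2 ≤ n) :
    phi n (1 - ∑ p : Fin n × Fin (n-1), eProj n p.1 p.2) = (0, 1) := by
  rw [map_sub, map_one, map_sum]
  have h1 : ∑ p : Fin n × Fin (n-1), phi n (eProj n p.1 p.2)
      = ((1 : Fin n × Fin (n-1) → ℂ), 0) := by
    have : ∀ p : Fin n × Fin (n-1), phi n (eProj n p.1 p.2) = (Pi.single p (1:ℂ), 0) := by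
      intro p; rw [phi_eProj n hn]
    rw [Finset.sum_congr rfl (fun p _ => this p)]
    have hs : (∑ x : Fin n × Fin (n-1), Pi.single x (1:ℂ)) = 1 := by
      have h := Finset.univ_sum_single (1 : Fin n × Fin (n-1) → ℂ)
      simpa using h
    ext q
    · rw [Prod.fst_sum]
      simp only [Prod.fst]
      rw [hs]
    · rw [Prod.snd_sum]
      simp [fst_sum]
    · rw [Prod.snd_sum]
      simp [snd_sum]
  rw [h1]
  ext
  · simp
  · simp
  · simp

lemma phi_surj (n : ℕ) (hn : 2 ≤ n) : Function.Surjective (phi n) := by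
  intro b
  refine ⟨(∑ p : Fin n × Fin (n-1), C (b.1 p) * eProj n p.1 p.2)
    + C b.2.fst * (1 - ∑ p : Fin n × Fin (n-1), eProj n p.1 p.2)
    + ∑ j : Fin n, C (b.2.snd j) * (X (Sum.inr j) - 1), ?_⟩
  rw [map_add, map_add, map_sum, map_mul, phi_q n hn]
  simp only [map_sum, map_mul]
  have hC : ∀ a : ℂ, phi n (C a) = algebraMap ℂ (Bmod n) a := fun a => by simp [phi]
  simp only [hC, phi_eProj n hn, phi_inr_sub_one']
  have halg1 : ∀ (a : ℂ) (p : Fin n × Fin (n-1)), ((algebraMap ℂ (Bmod n)) a).1 p = a :=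
    fun a p => rfl
  have halg2f : ∀ a : ℂ, ((algebraMap ℂ (Bmod n)) a).2.fst = a := fun a => rfl
  have halg2s : ∀ a : ℂ, ((algebraMap ℂ (Bmod n)) a).2.snd = 0 := fun a => rfl
  ext q
  · simp only [Prod.fst_add, Prod.fst_sum, Prod.fst_mul, Pi.add_apply, Finset.sum_apply,
      Pi.mul_apply, halg1]
    simp [Pi.single_apply, mul_ite, Finset.sum_ite_eq]
  · simp only [Prod.snd_add, Prod.snd_sum, Prod.snd_mul, fst_add, fst_sum, fst_mul,
      halg2f, fst_one, fst_inr]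
    simp
  · simp only [Prod.snd_add, Prod.snd_sum, Prod.snd_mul, snd_add, snd_sum, snd_mul,
      halg2f, halg2s, fst_one, snd_one, fst_inr, snd_inr, Pi.add_apply, Finset.sum_apply]
    simp [Pi.single_apply, smul_eq_mul, mul_ite, Finset.sum_ite_eq]

def fvec (n : ℕ) (I : Ideal (MvPolynomial (Fin n ⊕ Fin n) ℂ)) :
    (Fin n × Fin (n-1)) ⊕ (Fin n ⊕ Unit) → MvPolynomial (Fin n ⊕ Fin n) ℂ ⧸ I
  | .inl (i,a) => Ideal.Quotient.mk I (X (Sum.inl i)) ^ ((a:ℕ)+1)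
  | .inr (.inl j) => Ideal.Quotient.mk I (X (Sum.inr j))
  | .inr (.inr _) => 1

set_option maxHeartbeats 1000000 in
theorem stmt17 (n : ℕ) (hn : 2 ≤ n)
    (σ ν : Fin n → MvPolynomial (Fin n ⊕ Fin n) ℂ)
    (hσ : ∀ i, σ i = X (Sum.inl i)) (hν : ∀ j, ν j = X (Sum.inr j))
    (I : Ideal (MvPolynomial (Fin n ⊕ Fin n) ℂ))
    (hI : I = Ideal.span {p : MvPolynomial (Fin n ⊕ Fin n) ℂ |
      (∃ i, p = σ i ^ n - 1) ∨
      (∃ i j, p = (ν i - 1) * (ν j - 1)) ∨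
      (∃ i j, p = σ i * (ν j - 1) - (ν j - 1)) ∨
      (∃ i j, i ≠ j ∧ p = (σ i - 1) * (σ j - 1))}) :
    Module.finrank ℂ (MvPolynomial (Fin n ⊕ Fin n) ℂ ⧸ I) = n ^ 2 + 1 := by
  classical
  have hn0 : n ≠ 0 := by omega
  set mk := Ideal.Quotient.mk I with hmk
  -- generator memberships
  have hgen : ∀ p : MvPolynomial (Fin n ⊕ Fin n) ℂ, ((∃ i, p = σ i ^ n - 1) ∨
      (∃ i j, p = (ν i - 1) * (ν j - 1)) ∨
      (∃ i j, p = σ i * (ν j - 1) - (ν j - 1)) ∨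
      (∃ i j, i ≠ j ∧ p = (σ i - 1) * (σ j - 1))) → mk p = 0 := by
    intro p hp
    rw [hmk, Ideal.Quotient.eq_zero_iff_mem, hI]
    exact Ideal.subset_span hp
  -- basic relations in the quotient
  have hr1 : ∀ i, mk (X (Sum.inl i)) ^ n = 1 := by
    intro i
    have h := hgen _ (Or.inl ⟨i, rfl⟩)
    rw [hσ i, map_sub, map_pow, map_one, sub_eq_zero] at h
    exact h
  have hr2 : ∀ i j, (mk (X (Sum.inr i)) - 1) * (mk (X (Sum.inr j)) - 1) = 0 := by
    intro i j
    have h := hgen _ (Or.inr (Or.inl ⟨i, j, rfl⟩))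
    rw [hν i, hν j, map_mul, map_sub, map_sub, map_one] at h
    exact h
  have hr3 : ∀ i j, mk (X (Sum.inl i)) * (mk (X (Sum.inr j)) - 1)
      = mk (X (Sum.inr j)) - 1 := by
    intro i j
    have h := hgen _ (Or.inr (Or.inr (Or.inl ⟨i, j, rfl⟩)))
    rw [hσ i, hν j, map_sub, map_mul, map_sub, map_one, sub_eq_zero] at h
    exact h
  have hr4 : ∀ i j, i ≠ j → (mk (X (Sum.inl i)) - 1) * (mk (X (Sum.inl j)) - 1) = 0 := by
    intro i j hij
    have h := hgen _ (Or.inr (Or.inr (Or.inr ⟨i, j, hij, rfl⟩)))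
    rw [hσ i, hσ j, map_mul, map_sub, map_sub, map_one] at h
    exact h
  -- derived relations
  have hr3' : ∀ (i : Fin n) (k : ℕ) (j : Fin n),
      mk (X (Sum.inl i)) ^ k * (mk (X (Sum.inr j)) - 1) = mk (X (Sum.inr j)) - 1 := by
    intro i k j
    induction k with
    | zero => rw [pow_zero, one_mul]
    | succ m ih => rw [pow_succ, mul_assoc, hr3 i j, ih]
  have hr4' : ∀ i j, i ≠ j → ∀ k : ℕ,
      (mk (X (Sum.inl i)) - 1) * (mk (X (Sum.inl j)) ^ k - 1) = 0 := by
    intro i j hij k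
    induction k with
    | zero => rw [pow_zero, sub_self, mul_zero]
    | succ m ih => linear_combination mk (X (Sum.inl j)) * ih + hr4 i j hij
  -- the spanning family
  set Sp := Submodule.span ℂ (Set.range (fvec n I)) with hSp
  have h1 : (1 : MvPolynomial (Fin n ⊕ Fin n) ℂ ⧸ I) ∈ Sp := Submodule.subset_span ⟨.inr (.inr ()), rfl⟩
  have hv : ∀ j, mk (X (Sum.inr j)) ∈ Sp := fun j => Submodule.subset_span ⟨.inr (.inl j), rfl⟩
  have hs : ∀ (i : Fin n) (k : ℕ), k ≤ n → mk (X (Sum.inl i)) ^ k ∈ Sp := by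
    intro i k hk
    rcases Nat.eq_zero_or_pos k with h0 | h0
    · rw [h0, pow_zero]; exact h1
    rcases eq_or_ne k n with hkn | hkn
    · rw [hkn, hr1 i]; exact h1
    · exact Submodule.subset_span
        ⟨.inl (i, ⟨k - 1, by omega⟩), by
          show mk (X (Sum.inl i)) ^ (k - 1 + 1) = _
          rw [Nat.sub_add_cancel h0]⟩
  have hs1 : ∀ i : Fin n, mk (X (Sum.inl i)) ∈ Sp := by
    intro i
    have := hs i 1 (by omega)
    rwa [pow_one] at this
  have hmul : ∀ (t : Fin n ⊕ Fin n) (y : MvPolynomial (Fin n ⊕ Fin n) ℂ ⧸ I), y ∈ Sp → mk (X t) * y ∈ Sp := by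
    intro t y hy
    refine Submodule.span_induction ?_ ?_ ?_ ?_ hy
    · rintro x ⟨u, rfl⟩
      cases t with
      | inl i =>
        rcases u with ⟨j, a⟩ | j | u
        · show mk (X (Sum.inl i)) * mk (X (Sum.inl j)) ^ ((a : ℕ) + 1) ∈ Sp
          rcases eq_or_ne i j with hij | hij
          · subst hij
            have he : mk (X (Sum.inl i)) * mk (X (Sum.inl i)) ^ ((a : ℕ) + 1)
                = mk (X (Sum.inl i)) ^ ((a : ℕ) + 2) := by ring
            rw [he]
            exact hs i _ (by have := a.2; omega)
          · have he : mk (X (Sum.inl i)) * mk (X (Sum.inl j)) ^ ((a : ℕ) + 1)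
                = mk (X (Sum.inl j)) ^ ((a : ℕ) + 1) + mk (X (Sum.inl i)) - 1 := by
              linear_combination hr4' i j hij ((a : ℕ) + 1)
            rw [he]
            exact Submodule.sub_mem _
              (Submodule.add_mem _ (hs j _ (by have := a.2; omega)) (hs1 i)) h1
        · show mk (X (Sum.inl i)) * mk (X (Sum.inr j)) ∈ Sp
          have he : mk (X (Sum.inl i)) * mk (X (Sum.inr j))
              = mk (X (Sum.inr j)) + mk (X (Sum.inl i)) - 1 := by
            linear_combination hr3 i j
          rw [he]
          exact Submodule.sub_mem _ (Submodule.add_mem _ (hv j) (hs1 i)) h1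
        · show mk (X (Sum.inl i)) * 1 ∈ Sp
          rw [mul_one]; exact hs1 i
      | inr j =>
        rcases u with ⟨i, a⟩ | k | u
        · show mk (X (Sum.inr j)) * mk (X (Sum.inl i)) ^ ((a : ℕ) + 1) ∈ Sp
          have he : mk (X (Sum.inr j)) * mk (X (Sum.inl i)) ^ ((a : ℕ) + 1)
              = mk (X (Sum.inl i)) ^ ((a : ℕ) + 1) + mk (X (Sum.inr j)) - 1 := by
            linear_combination hr3' i ((a : ℕ) + 1) j
          rw [he]
          exact Submodule.sub_mem _
            (Submodule.add_mem _ (hs i _ (by have := a.2; omega)) (hv j)) h1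
        · show mk (X (Sum.inr j)) * mk (X (Sum.inr k)) ∈ Sp
          have he : mk (X (Sum.inr j)) * mk (X (Sum.inr k))
              = mk (X (Sum.inr j)) + mk (X (Sum.inr k)) - 1 := by
            linear_combination hr2 j k
          rw [he]
          exact Submodule.sub_mem _ (Submodule.add_mem _ (hv j) (hv k)) h1
        · show mk (X (Sum.inr j)) * 1 ∈ Sp
          rw [mul_one]; exact hv j
    · rw [mul_zero]; exact Submodule.zero_mem _
    · intro x y _ _ ihx ihy
      rw [mul_add]; exact Submodule.add_mem _ ihx ihy
    · intro a x _ ih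
      rw [mul_smul_comm]; exact Submodule.smul_mem _ _ ih
  have hall : ∀ p : MvPolynomial (Fin n ⊕ Fin n) ℂ, mk p ∈ Sp := by
    intro p
    induction p using MvPolynomial.induction_on with
    | C a =>
      have he : mk (C a) = a • (1 : MvPolynomial (Fin n ⊕ Fin n) ℂ ⧸ I) := by
        rw [hmk, ← Ideal.Quotient.mkₐ_eq_mk ℂ I,
          show (C a : MvPolynomial (Fin n ⊕ Fin n) ℂ) = a • 1 by
            rw [MvPolynomial.smul_eq_C_mul, mul_one],
          map_smul, map_one]
      rw [he]
      exact Submodule.smul_mem _ _ h1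
    | add p q hp hq => rw [map_add]; exact Submodule.add_mem _ hp hq
    | mul_X p t hp => rw [map_mul, mul_comm]; exact hmul t _ hp
  have hspan : Sp = ⊤ := by
    rw [eq_top_iff]
    rintro x -
    obtain ⟨p, rfl⟩ := Ideal.Quotient.mk_surjective x
    exact hall p
  haveI hfin : Module.Finite ℂ (MvPolynomial (Fin n ⊕ Fin n) ℂ ⧸ I) :=
    ⟨hspan ▸ Submodule.fg_span (Set.finite_range (fvec n I))⟩
  -- upper bound
  have hup : Module.finrank ℂ (MvPolynomial (Fin n ⊕ Fin n) ℂ ⧸ I) ≤ n ^ 2 + 1 := by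
    have h : Module.finrank ℂ ↥(Submodule.span ℂ (Set.range (fvec n I)))
        ≤ Fintype.card ((Fin n × Fin (n-1)) ⊕ (Fin n ⊕ Unit)) :=
      finrank_range_le_card (R := ℂ) (fvec n I)
    rw [← hSp, hspan, finrank_top] at h
    refine h.trans ?_
    simp only [Fintype.card_sum, Fintype.card_prod, Fintype.card_fin, Fintype.card_unit]
    obtain ⟨m, rfl⟩ : ∃ m, n = m + 2 := ⟨n - 2, by omega⟩
    have : m + 2 - 1 = m + 1 := by omega
    rw [this]
    ring_nf
    omega
  -- lower bound via the surjection onto Bmod n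
  have hker : ∀ a : MvPolynomial (Fin n ⊕ Fin n) ℂ, a ∈ I → phi n a = 0 := by
    intro a ha
    rw [hI] at ha
    have hle : Ideal.span {p : MvPolynomial (Fin n ⊕ Fin n) ℂ |
      (∃ i, p = σ i ^ n - 1) ∨
      (∃ i j, p = (ν i - 1) * (ν j - 1)) ∨
      (∃ i j, p = σ i * (ν j - 1) - (ν j - 1)) ∨
      (∃ i j, i ≠ j ∧ p = (σ i - 1) * (σ j - 1))} ≤ RingHom.ker ((phi n) : MvPolynomial (Fin n ⊕ Fin n) ℂ →+* Bmod n) := by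
      rw [Ideal.span_le]
      rintro p (⟨i, rfl⟩ | ⟨i, j, rfl⟩ | ⟨i, j, rfl⟩ | ⟨i, j, hij, rfl⟩)
      · rw [SetLike.mem_coe, RingHom.mem_ker, hσ i]; exact rel1 n hn0 i
      · rw [SetLike.mem_coe, RingHom.mem_ker, hν i, hν j]; exact rel2 n i j
      · rw [SetLike.mem_coe, RingHom.mem_ker, hσ i, hν j]; exact rel3 n i j
      · rw [SetLike.mem_coe, RingHom.mem_ker, hσ i, hσ j]; exact rel4 n i j hij
    exact hle ha
  set ψ := Ideal.Quotient.liftₐ I (phi n) hker with hψ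
  have hψs : Function.Surjective ψ := by
    intro b
    obtain ⟨p, hp⟩ := phi_surj n hn b
    exact ⟨mk p, by rw [hψ, hmk]; exact hp⟩
  have hlow : n ^ 2 + 1 ≤ Module.finrank ℂ (MvPolynomial (Fin n ⊕ Fin n) ℂ ⧸ I) := by
    have h := LinearMap.finrank_range_le (ψ.toLinearMap)
    have hrt : LinearMap.range (ψ.toLinearMap) = ⊤ := LinearMap.range_eq_top.mpr hψs
    rw [hrt, finrank_top, finrank_Bmod n hn] at h
    exact h
  omega
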